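/- Let U and V be abelian groups, w : U → V a surjective group homomorphism, B any group and m : B → V a group homomorphism; let A = {(b, u) ∈ B × U | m b = w u} be the pullback, with projections p₁ : A → B and p₂ : A → U. Since V is abelian, m factors uniquely through the abelianization as m̄ : Abelianization B → V with m̄ ∘ η_B = m, and since U is abelian, p₂ factors uniquely as p̄₂ : Abelianization A → U with p̄₂ ∘ η_A = p₂. Then the induced homomorphism Abelianization A → {(β, u) ∈ Abelianization B × U | m̄ β = w u}, given by c ↦ ((Abelianization.map p₁) c, p̄₂ c), is a bijection; that is, abelianization preserves the pullback of w along m. -/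

import Mathlib

private theorem abmap_mk {G H : Type*} [Group G] [Group H] (f : G →* H) (x : G) :
    Abelianization.map f (QuotientGroup.mk x) = QuotientGroup.mk (f x) := rfl

private theorem ablift_mk {G : Type*} [Group G] {A : Type*} [CommGroup A] (f : G →* A) (x : G) :
    Abelianization.lift f (QuotientGroup.mk x) = f x := rfl

/-- Admissibility of abelian groups as a Birkhoff subcategory of groups (Remark 5.4):
abelianization preserves the pullback of a surjection `w : U →* V` of abelian groups
along an arbitrary homomorphism `m : B →* V`. Here the pullback is the subgroup
`A = {(b, u) ∈ B × U | m b = w u}` of `B × U`, with projections `p₁ : A →* B` and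
`p₂ : A →* U`; `Abelianization.lift m` is the unique factorization `m̄` of `m` through
`η_B` (as `V` is abelian), and `Abelianization.lift p₂` the unique factorization `p̄₂`
of `p₂` through `η_A` (as `U` is abelian). The claim is that the induced homomorphism
`c ↦ ((Abelianization.map p₁) c, p̄₂ c)` is a bijection from `Abelianization A` onto
`{(β, u) ∈ Abelianization B × U | m̄ β = w u}`. -/
theorem stmt_12 {U V B : Type*} [CommGroup U] [CommGroup V] [Group B]
    (w : U →* V) (hw : Function.Surjective w) (m : B →* V)
    (p₁ : ((m.comp (MonoidHom.fst B U)).eqLocus (w.comp (MonoidHom.snd B U))) →* B)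
    (p₂ : ((m.comp (MonoidHom.fst B U)).eqLocus (w.comp (MonoidHom.snd B U))) →* U)
    (hp₁ : p₁ = (MonoidHom.fst B U).comp
      ((m.comp (MonoidHom.fst B U)).eqLocus (w.comp (MonoidHom.snd B U))).subtype)
    (hp₂ : p₂ = (MonoidHom.snd B U).comp
      ((m.comp (MonoidHom.fst B U)).eqLocus (w.comp (MonoidHom.snd B U))).subtype) :
    Set.BijOn
      (fun c => ((Abelianization.map p₁ c, Abelianization.lift p₂ c) :
        Abelianization B × U))
      Set.univ
      {βu : Abelianization B × U | Abelianization.lift m βu.1 = w βu.2} := by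
  subst hp₁ hp₂
  set A := ((m.comp (MonoidHom.fst B U)).eqLocus (w.comp (MonoidHom.snd B U))) with hA
  have key : ∀ b ∈ commutator B, ∃ a : A, a ∈ commutator A ∧ (a : B × U) = (b, 1) := by
    intro b hb
    rw [commutator_eq_closure] at hb
    induction hb using Subgroup.closure_induction with
    | mem x hx =>
      obtain ⟨b₁, b₂, rfl⟩ := hx
      obtain ⟨u₁, hu₁⟩ := hw (m b₁)
      obtain ⟨u₂, hu₂⟩ := hw (m b₂)
      have h₁ : (b₁, u₁) ∈ A := hu₁.symm
      have h₂ : (b₂, u₂) ∈ A := hu₂.symm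
      open scoped commutatorElement in refine ⟨⁅(⟨(b₁,u₁), h₁⟩ : A), (⟨(b₂,u₂), h₂⟩ : A)⁆, ?_, ?_⟩
      · exact Subgroup.commutator_mem_commutator (Subgroup.mem_top _) (Subgroup.mem_top _)
      · ext <;> simp [commutatorElement_def, mul_comm]
    | one => exact ⟨1, one_mem _, rfl⟩
    | mul x y hx hy ihx ihy =>
      obtain ⟨a, ha, hac⟩ := ihx
      obtain ⟨a', ha', hac'⟩ := ihy
      exact ⟨a * a', mul_mem ha ha', by simp [hac, hac']⟩
    | inv x hx ihx =>
      obtain ⟨a, ha, hac⟩ := ihx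
      exact ⟨a⁻¹, inv_mem ha, by simp [hac]⟩
  refine ⟨fun c _ => ?_, fun c _ c' _ h => ?_, fun βu hβu => ?_⟩
  · induction c using QuotientGroup.induction_on with
    | H a =>
      show Abelianization.lift m (Abelianization.map _ _) = _
      simp only [abmap_mk, ablift_mk]
      exact a.2
  · induction c using QuotientGroup.induction_on with
    | H a =>
      induction c' using QuotientGroup.induction_on with
      | H a' =>
        simp only [abmap_mk, ablift_mk, Prod.mk.injEq] at h
        obtain ⟨h1, h2⟩ := Prod.mk.inj h
        simp only [MonoidHom.coe_comp, Function.comp_apply, MonoidHom.coe_fst,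
          MonoidHom.coe_snd, Subgroup.coe_subtype] at h1 h2
        have hb : ((a : B × U).1)⁻¹ * (a' : B × U).1 ∈ commutator B :=
          QuotientGroup.eq.mp h1
        obtain ⟨a₀, ha₀, ha₀c⟩ := key _ hb
        have heq : a⁻¹ * a' = a₀ := by
          apply Subtype.ext
          rw [ha₀c]
          ext
          · rfl
          · show ((a : B × U).2)⁻¹ * (a' : B × U).2 = 1
            rw [h2, inv_mul_cancel]
        have hmem : a⁻¹ * a' ∈ commutator A := heq ▸ ha₀
        exact QuotientGroup.eq.mpr hmem
  · obtain ⟨β, u⟩ := βu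
    induction β using QuotientGroup.induction_on with
    | H b =>
      have hm : m b = w u := by simpa [ablift_mk] using hβu
      have hmem : (b, u) ∈ A := hm
      exact ⟨QuotientGroup.mk (⟨(b,u), hmem⟩ : A), Set.mem_univ _, by
        simp [abmap_mk, ablift_mk]⟩
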